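/- arXiv:0901.1918 — 4 statements merged into one kernel-verified Lean document; each statement's English description precedes it below -/
import Mathlib

section
/- Let q ∈ (−1,0), let a ∈ ℂ with |a|² = −q, set b = conj(a), and let z ∈ ℂ with |z| = 1. Define α(z) = (q²az;q)_∞ (q²az⁻¹;q)_∞ (q²bz;q)_∞ (q²bz⁻¹;q)_∞ (q²;q)_∞ / [ (q²z²;q)_∞ (q²;q)_∞² (q²z⁻²;q)_∞ (−q³;q)_∞ ], φ(z) = ∑_{k=0}^∞ q^{2k} · (−q²;q)_k (−iq²;q)_k (iq²;q)_k (q²;q)_k (bz;q)_k (bz⁻¹;q)_k (az;q)_k (az⁻¹;q)_k / [ (q;q)_k (−iq;q)_k (iq;q)_k (−q;q)_k (q²az⁻¹;q)_k (q²az;q)_k (q²bz⁻¹;q)_k (q²bz;q)_k ], and β(z) = (q;q)_∞ (−q;q)_∞ (z²;q)_∞ (z⁻²;q)_∞ / [ (az;q)_∞ (az⁻¹;q)_∞ (bz;q)_∞ (bz⁻¹;q)_∞ ]. Then all the infinite products and series involved converge, all denominators are nonzero, and α(z) φ(z) β(z) = (z²;q)₂ (z⁻²;q)₂ ∑_{k=0}^∞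 q^{2k}(1−q^{4(k+1)}) / [ (q^k az;q)₂ (q^k az⁻¹;q)₂ (q^k bz;q)₂ (q^k bz⁻¹;q)₂ ]. -/
/-- The finite q-Pochhammer symbol `(x;q)_k = ∏_{j=0}^{k-1} (1 - x q^j)`. -/
noncomputable def qPoch (x : ℂ) (q : ℝ) (k : ℕ) : ℂ :=
  ∏ j ∈ Finset.range k, (1 - x * (q : ℂ) ^ j)

/-- The infinite q-Pochhammer symbol `(x;q)_∞ = ∏_{j=0}^{∞} (1 - x q^j)`. -/
noncomputable def qPochInf (x : ℂ) (q : ℝ) : ℂ :=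
  ∏' j : ℕ, (1 - x * (q : ℂ) ^ j)

/-- The prefactor `α(z)` of the Poisson kernel decomposition. -/
noncomputable def alphaF (q : ℝ) (a b z : ℂ) : ℂ :=
  qPochInf ((q : ℂ) ^ 2 * a * z) q * qPochInf ((q : ℂ) ^ 2 * a * z⁻¹) q *
      qPochInf ((q : ℂ) ^ 2 * b * z) q * qPochInf ((q : ℂ) ^ 2 * b * z⁻¹) q *
      qPochInf ((q : ℂ) ^ 2) q /
    (qPochInf ((q : ℂ) ^ 2 * z ^ 2) q * qPochInf ((q : ℂ) ^ 2) q ^ 2 *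
      qPochInf ((q : ℂ) ^ 2 * z⁻¹ ^ 2) q * qPochInf (-(q : ℂ) ^ 3) q)

/-- The `k`-th term of the very-well-poised series `φ(z)`. -/
noncomputable def phiTerm (q : ℝ) (a b z : ℂ) (k : ℕ) : ℂ :=
  (q : ℂ) ^ (2 * k) *
    (qPoch (-(q : ℂ) ^ 2) q k * qPoch (-Complex.I * (q : ℂ) ^ 2) q k *
      qPoch (Complex.I * (q : ℂ) ^ 2) q k * qPoch ((q : ℂ) ^ 2) q k *
      qPoch (b * z) q k * qPoch (b * z⁻¹) q k * qPoch (a * z) q k * qPoch (a * z⁻¹) q k) /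
    (qPoch (q : ℂ) q k * qPoch (-Complex.I * (q : ℂ)) q k * qPoch (Complex.I * (q : ℂ)) q k *
      qPoch (-(q : ℂ)) q k * qPoch ((q : ℂ) ^ 2 * a * z⁻¹) q k * qPoch ((q : ℂ) ^ 2 * a * z) q k *
      qPoch ((q : ℂ) ^ 2 * b * z⁻¹) q k * qPoch ((q : ℂ) ^ 2 * b * z) q k)

/-- The density `β(z)` of the Askey–Wilson measure factor. -/
noncomputable def betaF (q : ℝ) (a b z : ℂ) : ℂ :=
  qPochInf (q : ℂ) q * qPochInf (-(q : ℂ)) q * qPochInf (z ^ 2) q * qPochInf (z⁻¹ ^ 2) q /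
    (qPochInf (a * z) q * qPochInf (a * z⁻¹) q * qPochInf (b * z) q * qPochInf (b * z⁻¹) q)

open Filter Finset

section aux
variable {q : ℝ}

lemma pair1 (x : ℂ) (k : ℕ) :
    qPoch (x * (q:ℂ)) q k * (1 - x) = qPoch x q k * (1 - x * (q:ℂ)^k) := by
  have h1 : qPoch x q (k+1) = qPoch x q k * (1 - x * (q:ℂ)^k) := by
    rw [qPoch, qPoch, Finset.prod_range_succ]
  have h2 : qPoch x q (k+1) = (∏ j ∈ Finset.range k, (1 - x * (q:ℂ)^(j+1))) * (1 - x) := by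
    rw [qPoch, Finset.prod_range_succ']
    simp
  have h3 : (∏ j ∈ Finset.range k, (1 - x * (q:ℂ)^(j+1))) = qPoch (x * (q:ℂ)) q k := by
    rw [qPoch]
    exact Finset.prod_congr rfl fun j _ => by rw [pow_succ]; ring
  rw [← h3, ← h2, h1]

lemma pochAdd (x : ℂ) (m n : ℕ) :
    qPoch x q (m + n) = qPoch x q m * qPoch (x * (q:ℂ)^m) q n := by
  rw [qPoch, qPoch, qPoch, Finset.prod_range_add]
  congr 1
  exact Finset.prod_congr rfl fun j _ => by rw [pow_add]; ring

lemma pair2 (x : ℂ) (k : ℕ) :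
    qPoch x q k * qPoch (x * (q:ℂ)^k) q 2 = qPoch x q 2 * qPoch (x * (q:ℂ)^2) q k := by
  rw [← pochAdd, ← pochAdd, Nat.add_comm]

lemma qPoch_one (y : ℂ) : qPoch y q 1 = 1 - y := by simp [qPoch]

lemma qPoch_two (y : ℂ) : qPoch y q 2 = (1 - y) * (1 - y * (q:ℂ)) := by
  rw [qPoch]
  rw [Finset.prod_range_succ, Finset.prod_range_one]
  simp

variable (hq1 : |q| < 1)
include hq1

lemma logSummable (y : ℂ) :
    Summable (fun n : ℕ => Complex.log (1 - y * (q:ℂ)^n)) := by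
  have hq0 : (0:ℝ) ≤ |q| := abs_nonneg q
  have htend : Tendsto (fun n : ℕ => ‖y‖ * |q|^n) atTop (nhds 0) := by
    simpa using (tendsto_pow_atTop_nhds_zero_of_lt_one hq0 hq1).const_mul ‖y‖
  obtain ⟨N, hN⟩ := (htend.eventually_lt_const (by norm_num : (0:ℝ) < 1/2)).exists
  rw [← summable_nat_add_iff N]
  have hb : ∀ n : ℕ, ‖Complex.log (1 - y * (q:ℂ)^(n + N))‖ ≤ (3/2 * (‖y‖ * |q|^N)) * |q|^n := by
    intro n
    have hw : ‖-(y * (q:ℂ)^(n+N))‖ = (‖y‖ * |q|^N) * |q|^n := by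
      simp [norm_mul, norm_pow, Complex.norm_real, pow_add]; ring
    have hwle : ‖-(y * (q:ℂ)^(n+N))‖ ≤ 1/2 := by
      rw [hw]
      calc (‖y‖ * |q|^N) * |q|^n ≤ (‖y‖ * |q|^N) * 1 :=
            mul_le_mul_of_nonneg_left (pow_le_one₀ hq0 hq1.le) (by positivity)
        _ ≤ 1/2 := by rw [mul_one]; exact hN.le
    have h2 := Complex.norm_log_one_add_half_le_self hwle
    rw [show (1 : ℂ) + -(y * (q:ℂ)^(n+N)) = 1 - y * (q:ℂ)^(n+N) by ring] at h2
    calc ‖Complex.log (1 - y * (q:ℂ)^(n + N))‖ ≤ 3/2 * ‖-(y * (q:ℂ)^(n+N))‖ := h2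
      _ = (3/2 * (‖y‖ * |q|^N)) * |q|^n := by rw [hw]; ring
  exact Summable.of_norm_bounded ((summable_geometric_of_lt_one hq0 hq1).mul_left _) hb

lemma fac_ne {y : ℂ} (hy : ‖y‖ < 1) (j : ℕ) : (1:ℂ) - y * (q:ℂ)^j ≠ 0 := by
  intro h
  have h1 : y * (q:ℂ)^j = 1 := by linear_combination -h
  have h2 : ‖y * (q:ℂ)^j‖ < 1 := by
    rw [norm_mul, norm_pow]
    calc ‖y‖ * ‖(q:ℂ)‖^j ≤ ‖y‖ * 1 := by
          refine mul_le_mul_of_nonneg_left (pow_le_one₀ (norm_nonneg _) ?_) (norm_nonneg _)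
          simpa [Complex.norm_real] using hq1.le
      _ < 1 := by simpa using hy
  rw [h1] at h2; simp at h2

lemma qPoch_ne {y : ℂ} (hy : ‖y‖ < 1) (k : ℕ) : qPoch y q k ≠ 0 := by
  rw [qPoch]
  exact Finset.prod_ne_zero_iff.2 fun j _ => fac_ne hq1 hy j

lemma keyMult {y : ℂ} (hy : ‖y‖ < 1) :
    Multipliable (fun j : ℕ => 1 - y * (q:ℂ)^j) :=
  Complex.multipliable_of_summable_log (logSummable hq1 y)

lemma keyNe {y : ℂ} (hy : ‖y‖ < 1) : qPochInf y q ≠ 0 := by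
  have h := Complex.cexp_tsum_eq_tprod (f := fun n => 1 - y * (q:ℂ)^n)
    (fun n => fac_ne hq1 hy n) (logSummable hq1 y)
  have h2 : Complex.exp (∑' n : ℕ, Complex.log (1 - y * (q:ℂ)^n)) =
      ∏' n : ℕ, (1 - y * (q:ℂ)^n) := h
  rw [qPochInf, ← h2]
  exact Complex.exp_ne_zero _

lemma multAll (x : ℂ) : Multipliable (fun j : ℕ => 1 - x * (q:ℂ)^j) := by
  have hq0 : (0:ℝ) ≤ |q| := abs_nonneg q
  have htend : Tendsto (fun n : ℕ => ‖x‖ * |q|^n) atTop (nhds 0) := by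
    simpa using (tendsto_pow_atTop_nhds_zero_of_lt_one hq0 hq1).const_mul ‖x‖
  obtain ⟨N, hN⟩ := (htend.eventually_lt_const (by norm_num : (0:ℝ) < 1)).exists
  have hyn : ‖x * (q:ℂ)^N‖ < 1 := by
    rw [norm_mul, norm_pow]; simpa [Complex.norm_real] using hN
  have hm : Multipliable (fun j : ℕ => 1 - (x * (q:ℂ)^N) * (q:ℂ)^j) := keyMult hq1 hyn
  have hm2 : Multipliable (fun j : ℕ => 1 - x * (q:ℂ)^(j + N)) := by
    refine hm.congr fun j => ?_
    rw [pow_add]; ring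
  exact ⟨_, HasProd.prod_range_mul (f := fun i : ℕ => 1 - x * (q:ℂ)^i) (k := N) hm2.hasProd⟩

lemma pochSplit (x : ℂ) (n : ℕ) :
    qPochInf x q = qPoch x q n * qPochInf (x * (q:ℂ)^n) q := by
  have hm2 : Multipliable (fun j : ℕ => (fun i : ℕ => 1 - x * (q:ℂ)^i) (j + n)) := by
    refine (multAll hq1 (x * (q:ℂ)^n)).congr fun j => ?_
    simp only; rw [pow_add]; ring
  have h := Multipliable.prod_mul_tprod_nat_mul' (f := fun i : ℕ => 1 - x * (q:ℂ)^i) hm2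
  rw [qPochInf, ← h, qPoch]
  congr 1
  rw [qPochInf]
  exact tprod_congr fun j => by simp only [pow_add]; ring

end aux



noncomputable def gTerm (q : ℝ) (a b z : ℂ) (k : ℕ) : ℂ :=
  (q : ℂ) ^ (2 * k) * (1 - (q : ℂ) ^ (4 * (k + 1))) /
    (qPoch ((q : ℂ) ^ k * a * z) q 2 * qPoch ((q : ℂ) ^ k * a * z⁻¹) q 2 *
      qPoch ((q : ℂ) ^ k * b * z) q 2 * qPoch ((q : ℂ) ^ k * b * z⁻¹) q 2)

noncomputable def CC (q : ℝ) (a b z : ℂ) : ℂ :=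
  qPoch (b * z) q 2 * qPoch (b * z⁻¹) q 2 * qPoch (a * z) q 2 * qPoch (a * z⁻¹) q 2 /
    (1 - (q : ℂ) ^ 4)


theorem stmt15 (q : ℝ) (hq : q ∈ Set.Ioo (-1 : ℝ) 0) (a b z : ℂ)
    (ha : ‖a‖ ^ 2 = -q) (hb : b = starRingEnd ℂ a) (hz : ‖z‖ = 1) :
    (∀ x : ℂ, Multipliable (fun j : ℕ => 1 - x * (q : ℂ) ^ j)) ∧
    (qPochInf ((q : ℂ) ^ 2 * z ^ 2) q * qPochInf ((q : ℂ) ^ 2) q ^ 2 *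
      qPochInf ((q : ℂ) ^ 2 * z⁻¹ ^ 2) q * qPochInf (-(q : ℂ) ^ 3) q ≠ 0) ∧
    (qPochInf (a * z) q * qPochInf (a * z⁻¹) q * qPochInf (b * z) q * qPochInf (b * z⁻¹) q ≠ 0) ∧
    (∀ k : ℕ,
      qPoch (q : ℂ) q k * qPoch (-Complex.I * (q : ℂ)) q k * qPoch (Complex.I * (q : ℂ)) q k *
        qPoch (-(q : ℂ)) q k * qPoch ((q : ℂ) ^ 2 * a * z⁻¹) q k * qPoch ((q : ℂ) ^ 2 * a * z) q k *
        qPoch ((q : ℂ) ^ 2 * b * z⁻¹) q k * qPoch ((q : ℂ) ^ 2 * b * z) q k ≠ 0) ∧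
    Summable (phiTerm q a b z) ∧
    (∀ k : ℕ,
      qPoch ((q : ℂ) ^ k * a * z) q 2 * qPoch ((q : ℂ) ^ k * a * z⁻¹) q 2 *
        qPoch ((q : ℂ) ^ k * b * z) q 2 * qPoch ((q : ℂ) ^ k * b * z⁻¹) q 2 ≠ 0) ∧
    alphaF q a b z * (∑' k : ℕ, phiTerm q a b z k) * betaF q a b z =
      qPoch (z ^ 2) q 2 * qPoch (z⁻¹ ^ 2) q 2 *
        ∑' k : ℕ, (q : ℂ) ^ (2 * k) * (1 - (q : ℂ) ^ (4 * (k + 1))) /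
          (qPoch ((q : ℂ) ^ k * a * z) q 2 * qPoch ((q : ℂ) ^ k * a * z⁻¹) q 2 *
            qPoch ((q : ℂ) ^ k * b * z) q 2 * qPoch ((q : ℂ) ^ k * b * z⁻¹) q 2) := by

  have hq1 : |q| < 1 := abs_lt.2 ⟨hq.1, lt_trans hq.2 one_pos⟩
  have hqc : ‖(q:ℂ)‖ = |q| := by rw [Complex.norm_real, Real.norm_eq_abs]
  have hs : ‖a‖ < 1 := by nlinarith [norm_nonneg a, hq.1]
  have hbn : ‖b‖ = ‖a‖ := by rw [hb, RCLike.norm_conj]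
  have hzn : ‖z⁻¹‖ = 1 := by rw [norm_inv, hz, inv_one]
  have hq0 : (0:ℝ) ≤ |q| := abs_nonneg q
  have ha0 : (0:ℝ) ≤ ‖a‖ := norm_nonneg a
  -- norms < 1
  have hql1 : ∀ m : ℕ, |q| ^ m ≤ 1 := fun m => pow_le_one₀ hq0 hq1.le
  have nqz2 : ‖(q:ℂ)^2 * z^2‖ < 1 := by
    rw [norm_mul, norm_pow, norm_pow, hqc, hz]
    simpa using pow_lt_one₀ hq0 hq1 (two_ne_zero)
  have nqzi2 : ‖(q:ℂ)^2 * z⁻¹^2‖ < 1 := by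
    rw [norm_mul, norm_pow, norm_pow, hqc, hzn]
    simpa using pow_lt_one₀ hq0 hq1 (two_ne_zero)
  have nq2 : ‖((q:ℂ)^2)‖ < 1 := by
    rw [norm_pow, hqc]; exact pow_lt_one₀ hq0 hq1 (two_ne_zero)
  have nq3 : ‖-(q:ℂ)^3‖ < 1 := by
    rw [norm_neg, norm_pow, hqc]; exact pow_lt_one₀ hq0 hq1 (three_ne_zero)
  have naz : ‖a * z‖ < 1 := by rw [norm_mul, hz, mul_one]; exact hs
  have nazi : ‖a * z⁻¹‖ < 1 := by rw [norm_mul, hzn, mul_one]; exact hs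
  have nbz : ‖b * z‖ < 1 := by rw [norm_mul, hbn, hz, mul_one]; exact hs
  have nbzi : ‖b * z⁻¹‖ < 1 := by rw [norm_mul, hbn, hzn, mul_one]; exact hs
  have habs : ∀ m : ℕ, |q| ^ m * ‖a‖ < 1 := fun m =>
    lt_of_le_of_lt (mul_le_of_le_one_left ha0 (hql1 m)) hs
  have nq2az : ‖(q:ℂ)^2 * a * z‖ < 1 := by
    rw [norm_mul, norm_mul, norm_pow, hqc, hz, mul_one]; exact habs 2
  have nq2azi : ‖(q:ℂ)^2 * a * z⁻¹‖ < 1 := by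
    rw [norm_mul, norm_mul, norm_pow, hqc, hzn, mul_one]; exact habs 2
  have nq2bz : ‖(q:ℂ)^2 * b * z‖ < 1 := by
    rw [norm_mul, norm_mul, norm_pow, hqc, hbn, hz, mul_one]; exact habs 2
  have nq2bzi : ‖(q:ℂ)^2 * b * z⁻¹‖ < 1 := by
    rw [norm_mul, norm_mul, norm_pow, hqc, hbn, hzn, mul_one]; exact habs 2
  have nq : ‖(q:ℂ)‖ < 1 := by rw [hqc]; exact hq1
  have nnq : ‖-(q:ℂ)‖ < 1 := by rw [norm_neg]; exact nq
  have nIq : ‖Complex.I * (q:ℂ)‖ < 1 := by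
    rw [norm_mul, Complex.norm_I, one_mul]; exact nq
  have nnIq : ‖-Complex.I * (q:ℂ)‖ < 1 := by
    rw [norm_mul, norm_neg, Complex.norm_I, one_mul]; exact nq
  have nkaz : ∀ k : ℕ, ‖(q:ℂ)^k * a * z‖ ≤ ‖a‖ := by
    intro k
    rw [norm_mul, norm_mul, norm_pow, hqc, hz, mul_one]
    exact mul_le_of_le_one_left ha0 (hql1 k)
  have nkazi : ∀ k : ℕ, ‖(q:ℂ)^k * a * z⁻¹‖ ≤ ‖a‖ := by
    intro k
    rw [norm_mul, norm_mul, norm_pow, hqc, hzn, mul_one]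
    exact mul_le_of_le_one_left ha0 (hql1 k)
  have nkbz : ∀ k : ℕ, ‖(q:ℂ)^k * b * z‖ ≤ ‖a‖ := by
    intro k
    rw [norm_mul, norm_mul, norm_pow, hqc, hbn, hz, mul_one]
    exact mul_le_of_le_one_left ha0 (hql1 k)
  have nkbzi : ∀ k : ℕ, ‖(q:ℂ)^k * b * z⁻¹‖ ≤ ‖a‖ := by
    intro k
    rw [norm_mul, norm_mul, norm_pow, hqc, hbn, hzn, mul_one]
    exact mul_le_of_le_one_left ha0 (hql1 k)
    -- infinite product nonvanishing
  have hZ1 : qPochInf ((q:ℂ)^2 * z^2) q ≠ 0 := keyNe hq1 nqz2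
  have hP : qPochInf ((q:ℂ)^2) q ≠ 0 := keyNe hq1 nq2
  have hZ2 : qPochInf ((q:ℂ)^2 * z⁻¹^2) q ≠ 0 := keyNe hq1 nqzi2
  have hQ3 : qPochInf (-(q:ℂ)^3) q ≠ 0 := keyNe hq1 nq3
  have c2 : qPochInf ((q : ℂ) ^ 2 * z ^ 2) q * qPochInf ((q : ℂ) ^ 2) q ^ 2 *
      qPochInf ((q : ℂ) ^ 2 * z⁻¹ ^ 2) q * qPochInf (-(q : ℂ) ^ 3) q ≠ 0 :=
    mul_ne_zero (mul_ne_zero (mul_ne_zero hZ1 (pow_ne_zero 2 hP)) hZ2) hQ3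
  have hAz : qPochInf (a * z) q ≠ 0 := keyNe hq1 naz
  have hAzi : qPochInf (a * z⁻¹) q ≠ 0 := keyNe hq1 nazi
  have hBz : qPochInf (b * z) q ≠ 0 := keyNe hq1 nbz
  have hBzi : qPochInf (b * z⁻¹) q ≠ 0 := keyNe hq1 nbzi
  have c3 : qPochInf (a * z) q * qPochInf (a * z⁻¹) q * qPochInf (b * z) q *
      qPochInf (b * z⁻¹) q ≠ 0 :=
    mul_ne_zero (mul_ne_zero (mul_ne_zero hAz hAzi) hBz) hBzi
  have c4 : ∀ k : ℕ,
      qPoch (q : ℂ) q k * qPoch (-Complex.I * (q : ℂ)) q k * qPoch (Complex.I * (q : ℂ)) q k *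
        qPoch (-(q : ℂ)) q k * qPoch ((q : ℂ) ^ 2 * a * z⁻¹) q k *
        qPoch ((q : ℂ) ^ 2 * a * z) q k *
        qPoch ((q : ℂ) ^ 2 * b * z⁻¹) q k * qPoch ((q : ℂ) ^ 2 * b * z) q k ≠ 0 := fun k =>
    mul_ne_zero (mul_ne_zero (mul_ne_zero (mul_ne_zero (mul_ne_zero (mul_ne_zero (mul_ne_zero
      (qPoch_ne hq1 nq k) (qPoch_ne hq1 nnIq k)) (qPoch_ne hq1 nIq k)) (qPoch_ne hq1 nnq k))
      (qPoch_ne hq1 nq2azi k)) (qPoch_ne hq1 nq2az k)) (qPoch_ne hq1 nq2bzi k))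
      (qPoch_ne hq1 nq2bz k)
  have hQ4 : (1:ℂ) - (q:ℂ)^4 ≠ 0 := by
    have h4 : ‖(q:ℂ)^4‖ < 1 := by
      rw [norm_pow, hqc]; exact pow_lt_one₀ hq0 hq1 four_ne_zero
    intro h
    rw [sub_eq_zero] at h
    rw [← h] at h4
    simp at h4
  have c6 : ∀ k : ℕ,
      qPoch ((q : ℂ) ^ k * a * z) q 2 * qPoch ((q : ℂ) ^ k * a * z⁻¹) q 2 *
        qPoch ((q : ℂ) ^ k * b * z) q 2 * qPoch ((q : ℂ) ^ k * b * z⁻¹) q 2 ≠ 0 := fun k =>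
    mul_ne_zero (mul_ne_zero (mul_ne_zero
      (qPoch_ne hq1 (lt_of_le_of_lt (nkaz k) hs) 2)
      (qPoch_ne hq1 (lt_of_le_of_lt (nkazi k) hs) 2))
      (qPoch_ne hq1 (lt_of_le_of_lt (nkbz k) hs) 2))
      (qPoch_ne hq1 (lt_of_le_of_lt (nkbzi k) hs) 2)
  -- lower bound on denominators and summability of gTerm
  have hts : (0:ℝ) < 1 - ‖a‖ := by linarith
  have hlb : ∀ y : ℂ, ‖y‖ ≤ ‖a‖ → (1 - ‖a‖)^2 ≤ ‖qPoch y q 2‖ := by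
    intro y hy
    rw [qPoch_two, norm_mul]
    have h1 : 1 - ‖a‖ ≤ ‖1 - y‖ := by
      have h := norm_sub_norm_le (1:ℂ) y
      rw [norm_one] at h; linarith
    have h2 : 1 - ‖a‖ ≤ ‖1 - y * (q:ℂ)‖ := by
      have h := norm_sub_norm_le (1:ℂ) (y * (q:ℂ))
      rw [norm_one] at h
      have hyq : ‖y * (q:ℂ)‖ ≤ ‖a‖ := by
        rw [norm_mul, hqc]
        calc ‖y‖ * |q| ≤ ‖a‖ * 1 := mul_le_mul hy hq1.le hq0 ha0
          _ = ‖a‖ := mul_one _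
      linarith
    calc (1-‖a‖)^2 = (1-‖a‖)*(1-‖a‖) := by ring
      _ ≤ ‖1 - y‖ * ‖1 - y * (q:ℂ)‖ := mul_le_mul h1 h2 hts.le (norm_nonneg _)
  have hDlb : ∀ k : ℕ, (1-‖a‖)^8 ≤
      ‖qPoch ((q : ℂ) ^ k * a * z) q 2 * qPoch ((q : ℂ) ^ k * a * z⁻¹) q 2 *
        qPoch ((q : ℂ) ^ k * b * z) q 2 * qPoch ((q : ℂ) ^ k * b * z⁻¹) q 2‖ := by
    intro k
    rw [norm_mul, norm_mul, norm_mul]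
    have g1 := hlb _ (nkaz k)
    have g2 := hlb _ (nkazi k)
    have g3 := hlb _ (nkbz k)
    have g4 := hlb _ (nkbzi k)
    calc (1-‖a‖)^8 = (1-‖a‖)^2 * (1-‖a‖)^2 * (1-‖a‖)^2 * (1-‖a‖)^2 := by ring
      _ ≤ _ :=
        mul_le_mul (mul_le_mul (mul_le_mul g1 g2 (by positivity) (norm_nonneg _))
          g3 (by positivity) (by positivity)) g4 (by positivity) (by positivity)
  have hq2lt : |q|^2 < 1 := pow_lt_one₀ hq0 hq1 two_ne_zero
  have hgb : ∀ k : ℕ, ‖gTerm q a b z k‖ ≤ 2 / (1-‖a‖)^8 * (|q|^2)^k := by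
    intro k
    simp only [gTerm]
    rw [norm_div, norm_mul]
    have hnum : ‖(q:ℂ)^(2*k)‖ * ‖1 - (q:ℂ)^(4*(k+1))‖ ≤ (|q|^2)^k * 2 := by
      rw [norm_pow, hqc, pow_mul]
      refine mul_le_mul_of_nonneg_left ?_ (by positivity)
      calc ‖(1:ℂ) - (q:ℂ)^(4*(k+1))‖ ≤ ‖(1:ℂ)‖ + ‖(q:ℂ)^(4*(k+1))‖ := norm_sub_le _ _
        _ ≤ 1 + 1 := by
            rw [norm_one, norm_pow, hqc]
            exact add_le_add_right (hql1 (4*(k+1))) 1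
        _ = 2 := by norm_num
    calc _ ≤ ((|q|^2)^k * 2) / (1-‖a‖)^8 :=
          div_le_div₀ (by positivity) hnum (by positivity) (hDlb k)
      _ = 2 / (1-‖a‖)^8 * (|q|^2)^k := by ring
  have hgsum : Summable (gTerm q a b z) :=
    Summable.of_norm_bounded
      ((summable_geometric_of_lt_one (by positivity) hq2lt).mul_left _) hgb
  -- termwise identity
  have hphi : ∀ k : ℕ, phiTerm q a b z k = CC q a b z * gTerm q a b z k := by
    intro k
    have e1 : qPoch (-(q:ℂ)^2) q k * (1 - -(q:ℂ)) =
        qPoch (-(q:ℂ)) q k * (1 - -(q:ℂ) * (q:ℂ)^k) := by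
      have h := pair1 (q := q) (-(q:ℂ)) k
      rw [show -(q:ℂ) * (q:ℂ) = -(q:ℂ)^2 by ring] at h
      exact h
    have e2 : qPoch (-Complex.I * (q:ℂ)^2) q k * (1 - -Complex.I * (q:ℂ)) =
        qPoch (-Complex.I * (q:ℂ)) q k * (1 - -Complex.I * (q:ℂ) * (q:ℂ)^k) := by
      have h := pair1 (q := q) (-Complex.I * (q:ℂ)) k
      rw [show -Complex.I * (q:ℂ) * (q:ℂ) = -Complex.I * (q:ℂ)^2 by ring] at h
      exact h
    have e3 : qPoch (Complex.I * (q:ℂ)^2) q k * (1 - Complex.I * (q:ℂ)) =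
        qPoch (Complex.I * (q:ℂ)) q k * (1 - Complex.I * (q:ℂ) * (q:ℂ)^k) := by
      have h := pair1 (q := q) (Complex.I * (q:ℂ)) k
      rw [show Complex.I * (q:ℂ) * (q:ℂ) = Complex.I * (q:ℂ)^2 by ring] at h
      exact h
    have e4 : qPoch ((q:ℂ)^2) q k * (1 - (q:ℂ)) =
        qPoch ((q:ℂ)) q k * (1 - (q:ℂ) * (q:ℂ)^k) := by
      have h := pair1 (q := q) ((q:ℂ)) k
      rw [show (q:ℂ) * (q:ℂ) = (q:ℂ)^2 by ring] at h
      exact h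
    have e5 : qPoch (b * z) q k * qPoch ((q:ℂ)^k * b * z) q 2 =
        qPoch (b * z) q 2 * qPoch ((q:ℂ)^2 * b * z) q k := by
      have h := pair2 (q := q) (b * z) k
      rw [show b * z * (q:ℂ)^k = (q:ℂ)^k * b * z by ring,
        show b * z * (q:ℂ)^2 = (q:ℂ)^2 * b * z by ring] at h
      exact h
    have e6 : qPoch (b * z⁻¹) q k * qPoch ((q:ℂ)^k * b * z⁻¹) q 2 =
        qPoch (b * z⁻¹) q 2 * qPoch ((q:ℂ)^2 * b * z⁻¹) q k := by
      have h := pair2 (q := q) (b * z⁻¹) k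
      rw [show b * z⁻¹ * (q:ℂ)^k = (q:ℂ)^k * b * z⁻¹ by ring,
        show b * z⁻¹ * (q:ℂ)^2 = (q:ℂ)^2 * b * z⁻¹ by ring] at h
      exact h
    have e7 : qPoch (a * z) q k * qPoch ((q:ℂ)^k * a * z) q 2 =
        qPoch (a * z) q 2 * qPoch ((q:ℂ)^2 * a * z) q k := by
      have h := pair2 (q := q) (a * z) k
      rw [show a * z * (q:ℂ)^k = (q:ℂ)^k * a * z by ring,
        show a * z * (q:ℂ)^2 = (q:ℂ)^2 * a * z by ring] at h
      exact h
    have e8 : qPoch (a * z⁻¹) q k * qPoch ((q:ℂ)^k * a * z⁻¹) q 2 =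
        qPoch (a * z⁻¹) q 2 * qPoch ((q:ℂ)^2 * a * z⁻¹) q k := by
      have h := pair2 (q := q) (a * z⁻¹) k
      rw [show a * z⁻¹ * (q:ℂ)^k = (q:ℂ)^k * a * z⁻¹ by ring,
        show a * z⁻¹ * (q:ℂ)^2 = (q:ℂ)^2 * a * z⁻¹ by ring] at h
      exact h
    have hw : (1:ℂ) - (q:ℂ)^4 =
        (1 - (q:ℂ)) * (1 - -(q:ℂ)) * (1 - Complex.I * (q:ℂ)) * (1 - -Complex.I * (q:ℂ)) := by
      linear_combination ((1:ℂ) - (q:ℂ)^2) * (q:ℂ)^2 * Complex.I_sq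
    have hwk : (1:ℂ) - (q:ℂ)^(4*(k+1)) =
        (1 - (q:ℂ) * (q:ℂ)^k) * (1 - -(q:ℂ) * (q:ℂ)^k) * (1 - Complex.I * (q:ℂ) * (q:ℂ)^k) *
          (1 - -Complex.I * (q:ℂ) * (q:ℂ)^k) := by
      linear_combination ((1:ℂ) - ((q:ℂ) * (q:ℂ)^k)^2) * ((q:ℂ) * (q:ℂ)^k)^2 * Complex.I_sq
    have G : (qPoch (-(q:ℂ)^2) q k * (1 - -(q:ℂ))) *
        (qPoch (-Complex.I * (q:ℂ)^2) q k * (1 - -Complex.I * (q:ℂ))) *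
        (qPoch (Complex.I * (q:ℂ)^2) q k * (1 - Complex.I * (q:ℂ))) *
        (qPoch ((q:ℂ)^2) q k * (1 - (q:ℂ))) *
        (qPoch (b * z) q k * qPoch ((q:ℂ)^k * b * z) q 2) *
        (qPoch (b * z⁻¹) q k * qPoch ((q:ℂ)^k * b * z⁻¹) q 2) *
        (qPoch (a * z) q k * qPoch ((q:ℂ)^k * a * z) q 2) *
        (qPoch (a * z⁻¹) q k * qPoch ((q:ℂ)^k * a * z⁻¹) q 2) =
        (qPoch (-(q:ℂ)) q k * (1 - -(q:ℂ) * (q:ℂ)^k)) *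
        (qPoch (-Complex.I * (q:ℂ)) q k * (1 - -Complex.I * (q:ℂ) * (q:ℂ)^k)) *
        (qPoch (Complex.I * (q:ℂ)) q k * (1 - Complex.I * (q:ℂ) * (q:ℂ)^k)) *
        (qPoch ((q:ℂ)) q k * (1 - (q:ℂ) * (q:ℂ)^k)) *
        (qPoch (b * z) q 2 * qPoch ((q:ℂ)^2 * b * z) q k) *
        (qPoch (b * z⁻¹) q 2 * qPoch ((q:ℂ)^2 * b * z⁻¹) q k) *
        (qPoch (a * z) q 2 * qPoch ((q:ℂ)^2 * a * z) q k) *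
        (qPoch (a * z⁻¹) q 2 * qPoch ((q:ℂ)^2 * a * z⁻¹) q k) := by
      rw [e1, e2, e3, e4, e5, e6, e7, e8]
    simp only [phiTerm, gTerm, CC]
    rw [div_mul_div_comm, div_eq_div_iff (c4 k) (mul_ne_zero hQ4 (c6 k)), hw, hwk]
    linear_combination (q:ℂ)^(2*k) * G
  have c5 : Summable (phiTerm q a b z) := by
    rw [show phiTerm q a b z = fun k => CC q a b z * gTerm q a b z k from funext hphi]
    exact hgsum.mul_left _
  -- splitting of infinite products
  have sp1 : qPochInf (a * z) q = qPoch (a * z) q 2 * qPochInf ((q:ℂ)^2 * a * z) q := by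
    have h := pochSplit hq1 (a * z) 2
    rw [show a * z * (q:ℂ)^2 = (q:ℂ)^2 * a * z by ring] at h
    exact h
  have sp2 : qPochInf (a * z⁻¹) q = qPoch (a * z⁻¹) q 2 * qPochInf ((q:ℂ)^2 * a * z⁻¹) q := by
    have h := pochSplit hq1 (a * z⁻¹) 2
    rw [show a * z⁻¹ * (q:ℂ)^2 = (q:ℂ)^2 * a * z⁻¹ by ring] at h
    exact h
  have sp3 : qPochInf (b * z) q = qPoch (b * z) q 2 * qPochInf ((q:ℂ)^2 * b * z) q := by
    have h := pochSplit hq1 (b * z) 2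
    rw [show b * z * (q:ℂ)^2 = (q:ℂ)^2 * b * z by ring] at h
    exact h
  have sp4 : qPochInf (b * z⁻¹) q = qPoch (b * z⁻¹) q 2 * qPochInf ((q:ℂ)^2 * b * z⁻¹) q := by
    have h := pochSplit hq1 (b * z⁻¹) 2
    rw [show b * z⁻¹ * (q:ℂ)^2 = (q:ℂ)^2 * b * z⁻¹ by ring] at h
    exact h
  have sp5 : qPochInf (z^2) q = qPoch (z^2) q 2 * qPochInf ((q:ℂ)^2 * z^2) q := by
    have h := pochSplit hq1 (z^2) 2
    rw [show z^2 * (q:ℂ)^2 = (q:ℂ)^2 * z^2 by ring] at h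
    exact h
  have sp6 : qPochInf (z⁻¹^2) q = qPoch (z⁻¹^2) q 2 * qPochInf ((q:ℂ)^2 * z⁻¹^2) q := by
    have h := pochSplit hq1 (z⁻¹^2) 2
    rw [show z⁻¹^2 * (q:ℂ)^2 = (q:ℂ)^2 * z⁻¹^2 by ring] at h
    exact h
  have sp7 : qPochInf ((q:ℂ)) q = (1 - (q:ℂ)) * qPochInf ((q:ℂ)^2) q := by
    have h := pochSplit hq1 ((q:ℂ)) 1
    rw [show (q:ℂ) * (q:ℂ)^1 = (q:ℂ)^2 by ring, qPoch_one] at h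
    exact h
  have sp8 : qPochInf (-(q:ℂ)) q =
      ((1 - -(q:ℂ)) * (1 - -(q:ℂ) * (q:ℂ))) * qPochInf (-(q:ℂ)^3) q := by
    have h := pochSplit hq1 (-(q:ℂ)) 2
    rw [show -(q:ℂ) * (q:ℂ)^2 = -(q:ℂ)^3 by ring, qPoch_two] at h
    exact h
  have hcz1 : qPoch (a * z) q 2 ≠ 0 := qPoch_ne hq1 naz 2
  have hcz2 : qPoch (a * z⁻¹) q 2 ≠ 0 := qPoch_ne hq1 nazi 2
  have hcz3 : qPoch (b * z) q 2 ≠ 0 := qPoch_ne hq1 nbz 2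
  have hcz4 : qPoch (b * z⁻¹) q 2 ≠ 0 := qPoch_ne hq1 nbzi 2
  have hA1 : qPochInf ((q:ℂ)^2 * a * z) q ≠ 0 := keyNe hq1 nq2az
  have hA2 : qPochInf ((q:ℂ)^2 * a * z⁻¹) q ≠ 0 := keyNe hq1 nq2azi
  have hA3 : qPochInf ((q:ℂ)^2 * b * z) q ≠ 0 := keyNe hq1 nq2bz
  have hA4 : qPochInf ((q:ℂ)^2 * b * z⁻¹) q ≠ 0 := keyNe hq1 nq2bzi
  have hcoef : alphaF q a b z * CC q a b z * betaF q a b z =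
      qPoch (z^2) q 2 * qPoch (z⁻¹^2) q 2 := by
    simp only [alphaF, betaF, CC]
    rw [sp1, sp2, sp3, sp4, sp5, sp6, sp7, sp8]
    have hDb : qPoch (a * z) q 2 * qPochInf ((q:ℂ)^2 * a * z) q *
        (qPoch (a * z⁻¹) q 2 * qPochInf ((q:ℂ)^2 * a * z⁻¹) q) *
        (qPoch (b * z) q 2 * qPochInf ((q:ℂ)^2 * b * z) q) *
        (qPoch (b * z⁻¹) q 2 * qPochInf ((q:ℂ)^2 * b * z⁻¹) q) ≠ 0 :=
      mul_ne_zero (mul_ne_zero (mul_ne_zero (mul_ne_zero hcz1 hA1)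
        (mul_ne_zero hcz2 hA2)) (mul_ne_zero hcz3 hA3)) (mul_ne_zero hcz4 hA4)
    rw [div_mul_div_comm, div_mul_div_comm,
      div_eq_iff (mul_ne_zero (mul_ne_zero c2 hQ4) hDb)]
    ring
  have hTsum : (∑' k : ℕ, phiTerm q a b z k) = CC q a b z * ∑' k : ℕ, gTerm q a b z k := by
    rw [tsum_congr hphi, tsum_mul_left]
  have c7 : alphaF q a b z * (∑' k : ℕ, phiTerm q a b z k) * betaF q a b z =
      qPoch (z ^ 2) q 2 * qPoch (z⁻¹ ^ 2) q 2 * ∑' k : ℕ, gTerm q a b z k := by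
    rw [hTsum]
    calc alphaF q a b z * (CC q a b z * ∑' k : ℕ, gTerm q a b z k) * betaF q a b z
        = (alphaF q a b z * CC q a b z * betaF q a b z) * ∑' k : ℕ, gTerm q a b z k := by
          ring
      _ = qPoch (z ^ 2) q 2 * qPoch (z⁻¹ ^ 2) q 2 * ∑' k : ℕ, gTerm q a b z k := by
          rw [hcoef]
  exact ⟨fun x => multAll hq1 x, c2, c3, c4, c5, c6, c7⟩
end

section
/- Let q ∈ (−1,0) and let k ≥ 0 be an integer. Then (1/2π) ∫_0^{2π} F_q(t) (2cos t)^{2k} dt = C(2k,k) + 2 ∑_{r=1}^k (−1)^r C(2k, k−r) c_r(q), where C(m,j) is the binomial coefficient. (This corrects a misprint in the paper, where the factor 2 in front of the sum is omitted.) -/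
/-- `c q r` for `r ≥ 1`: the Fourier coefficient `q^(r-1)(1+q)^2/((1+q^(r+1))(1+q^(r-1)))`. -/
noncomputable def circCoeff (q : ℝ) (r : ℕ) : ℝ :=
  q ^ (r - 1) * (1 + q) ^ 2 / ((1 + q ^ (r + 1)) * (1 + q ^ (r - 1)))

/-- The circular density `F_q(t) = 1 + 2 ∑_{r≥1} (-1)^r c_r(q) cos(2rt)`. -/
noncomputable def circDensity (q : ℝ) (t : ℝ) : ℝ :=
  1 + 2 * ∑' r : ℕ, (-1 : ℝ) ^ (r + 1) * circCoeff q (r + 1) * Real.cos (2 * (r + 1) * t)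

/- ## Auxiliary lemmas -/

noncomputable def cexpI (c : ℂ) (t : ℝ) : ℂ := Complex.exp (c * (Complex.I * t))

lemma cexpI_continuous (c : ℂ) : Continuous (cexpI c) := by
  unfold cexpI; fun_prop

lemma cexpI_mul (a b : ℂ) (t : ℝ) : cexpI a t * cexpI b t = cexpI (a + b) t := by
  rw [cexpI, cexpI, cexpI, ← Complex.exp_add]; ring_nf

lemma cexpI_pow (a : ℂ) (n : ℕ) (t : ℝ) : cexpI a t ^ n = cexpI (n * a) t := by
  rw [cexpI, cexpI, ← Complex.exp_nat_mul]; ring_nf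

lemma expInt (n : ℤ) :
    ∫ t in (0:ℝ)..(2*Real.pi), cexpI (n : ℂ) t =
      if n = 0 then (2*Real.pi : ℂ) else 0 := by
  rcases eq_or_ne n 0 with h | h
  · simp [h, cexpI]
  · rw [if_neg h]
    have hc : (n : ℂ) * Complex.I ≠ 0 := by
      simp [Complex.ext_iff, h]
    simp only [cexpI, ← mul_assoc]
    rw [integral_exp_mul_complex hc]
    have : Complex.exp ((n:ℂ) * Complex.I * (2*Real.pi)) = 1 := by
      rw [show (n:ℂ) * Complex.I * (2*Real.pi) = n * (2 * Real.pi * Complex.I) by ring]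
      exact Complex.exp_int_mul_two_pi_mul_I n
    simp [this]

lemma two_cos_eq (t : ℝ) : 2 * Complex.cos t = cexpI 1 t + cexpI (-1) t := by
  rw [Complex.two_cos, cexpI, cexpI]; ring_nf

lemma cos_eq' (r : ℕ) (t : ℝ) :
    (Complex.cos (2*r*t)) = (cexpI ((2*r : ℤ) : ℂ) t + cexpI (-(2*r : ℤ) : ℂ) t) / 2 := by
  rw [Complex.cos, cexpI, cexpI]
  norm_num
  ring_nf

lemma heq (r k : ℕ) (t : ℝ) :
    Complex.cos (2*r*t) * (2*Complex.cos t)^(2*k) =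
      ∑ j ∈ Finset.range (2*k+1), ((Nat.choose (2*k) j : ℂ)/2) *
        (cexpI (((2*j : ℤ) - 2*k + 2*r : ℤ) : ℂ) t +
         cexpI (((2*j : ℤ) - 2*k - 2*r : ℤ) : ℂ) t) := by
  rw [cos_eq' r t, show (2:ℂ)*Complex.cos t = 2 * Complex.cos (t:ℝ) by norm_num,
    two_cos_eq, add_pow, Finset.mul_sum]
  refine Finset.sum_congr rfl fun j hj => ?_
  have hj' : j ≤ 2*k := by simpa using Nat.lt_succ_iff.mp (Finset.mem_range.mp hj)
  rw [cexpI_pow, cexpI_pow, cexpI_mul]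
  have h1 : ((j:ℂ) * 1 + (2*k - j : ℕ) * (-1)) = (((2*j : ℤ) - 2*k : ℤ) : ℂ) := by
    push_cast [Nat.cast_sub hj']
    ring
  rw [h1, add_div, add_mul, mul_add]
  congr 1
  · rw [show (((2*j:ℤ) - 2*k + 2*r : ℤ):ℂ) = (((2*j:ℤ)-2*k : ℤ):ℂ) + ((2*r:ℤ):ℂ) by push_cast; ring,
      ← cexpI_mul]
    ring
  · rw [show (((2*j:ℤ) - 2*k - 2*r : ℤ):ℂ) = (((2*j:ℤ)-2*k : ℤ):ℂ) + (-(2*r:ℤ):ℂ) by push_cast; ring,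
      ← cexpI_mul]
    ring

lemma cosPowInt (r k : ℕ) :
    ∫ t in (0:ℝ)..(2*Real.pi), Real.cos (2*r*t) * (2*Real.cos t)^(2*k) =
      if r ≤ k then 2*Real.pi*(Nat.choose (2*k) (k-r)) else 0 := by
  have key : (↑(∫ t in (0:ℝ)..(2*Real.pi), Real.cos (2*r*t) * (2*Real.cos t)^(2*k)) : ℂ)
      = ∫ t in (0:ℝ)..(2*Real.pi), Complex.cos (2*r*t) * (2*Complex.cos t)^(2*k) := by
    rw [← intervalIntegral.integral_ofReal]
    congr 1; funext t; push_cast [Complex.ofReal_cos]; norm_num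
  have h2 : (∫ t in (0:ℝ)..(2*Real.pi), Complex.cos (2*r*t) * (2*Complex.cos t)^(2*k))
      = ∑ j ∈ Finset.range (2*k+1), ((Nat.choose (2*k) j : ℂ)/2) *
          ((if ((2*j:ℤ) - 2*k + 2*r : ℤ) = 0 then (2*Real.pi:ℂ) else 0) +
           (if ((2*j:ℤ) - 2*k - 2*r : ℤ) = 0 then (2*Real.pi:ℂ) else 0)) := by
    simp_rw [heq]
    rw [intervalIntegral.integral_finset_sum (fun j _ =>
      (Continuous.intervalIntegrable (u := fun t => ((Nat.choose (2*k) j : ℂ)/2) * (cexpI (((2*j : ℤ) - 2*k + 2*r : ℤ) : ℂ) t + cexpI (((2*j : ℤ) - 2*k - 2*r : ℤ) : ℂ) t)) (continuous_const.mul ((cexpI_continuous _).add (cexpI_continuous _))) _ _))]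
    refine Finset.sum_congr rfl fun j hj => ?_
    rw [intervalIntegral.integral_const_mul,
      intervalIntegral.integral_add ((cexpI_continuous _).intervalIntegrable _ _)
        ((cexpI_continuous _).intervalIntegrable _ _), expInt, expInt]
  rw [h2] at key
  by_cases hr : r ≤ k
  · rw [if_pos hr]
    have e1 : ∑ j ∈ Finset.range (2*k+1), ((Nat.choose (2*k) j : ℂ)/2) *
          ((if ((2*j:ℤ) - 2*k + 2*r : ℤ) = 0 then (2*Real.pi:ℂ) else 0) +
           (if ((2*j:ℤ) - 2*k - 2*r : ℤ) = 0 then (2*Real.pi:ℂ) else 0))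
        = ((2*Real.pi : ℝ) * (Nat.choose (2*k) (k-r)) : ℂ) := by
      have step : ∀ j ∈ Finset.range (2*k+1), ((Nat.choose (2*k) j : ℂ)/2) *
          ((if ((2*j:ℤ) - 2*k + 2*r : ℤ) = 0 then (2*Real.pi:ℂ) else 0) +
           (if ((2*j:ℤ) - 2*k - 2*r : ℤ) = 0 then (2*Real.pi:ℂ) else 0))
          = (if j = k - r then (Nat.choose (2*k) j : ℂ)/2 * (2*Real.pi) else 0)
            + (if j = k + r then (Nat.choose (2*k) j : ℂ)/2 * (2*Real.pi) else 0) := by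
        intro j hj
        have c1 : (((2*j:ℤ) - 2*k + 2*r : ℤ) = 0) ↔ j = k - r := by omega
        have c2 : (((2*j:ℤ) - 2*k - 2*r : ℤ) = 0) ↔ j = k + r := by omega
        rw [mul_add, mul_ite, mul_zero, mul_ite, mul_zero,
          if_congr c1 rfl rfl, if_congr c2 rfl rfl]
      rw [Finset.sum_congr rfl step, Finset.sum_add_distrib,
        Finset.sum_ite_eq' _ (k-r), Finset.sum_ite_eq' _ (k+r),
        if_pos (by simp; omega : k - r ∈ Finset.range (2*k+1)),
        if_pos (by simp; omega : k + r ∈ Finset.range (2*k+1))]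
      have hsymm : Nat.choose (2*k) (k+r) = Nat.choose (2*k) (k-r) := by
        rw [← Nat.choose_symm (by omega : k + r ≤ 2*k)]
        congr 1; omega
      rw [hsymm]; push_cast; ring
    rw [e1] at key
    exact_mod_cast key
  · rw [if_neg hr]
    have e1 : ∑ j ∈ Finset.range (2*k+1), ((Nat.choose (2*k) j : ℂ)/2) *
          ((if ((2*j:ℤ) - 2*k + 2*r : ℤ) = 0 then (2*Real.pi:ℂ) else 0) +
           (if ((2*j:ℤ) - 2*k - 2*r : ℤ) = 0 then (2*Real.pi:ℂ) else 0))
        = 0 := by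
      refine Finset.sum_eq_zero fun j hj => ?_
      have hj' : j ≤ 2*k := by simpa using Nat.lt_succ_iff.mp (Finset.mem_range.mp hj)
      rw [if_neg (by omega), if_neg (by omega)]
      ring
    rw [e1] at key
    exact_mod_cast key

lemma pow_ge' (q : ℝ) (hq : q ∈ Set.Ioo (-1 : ℝ) 0) (s : ℕ) : q ≤ q ^ s := by
  obtain ⟨h1, h2⟩ := hq
  rcases Nat.eq_zero_or_pos s with h | h
  · simp [h]; linarith
  · have habs : |q| ≤ 1 := (abs_lt.mpr ⟨h1, by linarith⟩).le
    have : |q ^ s| ≤ |q| := by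
      rw [abs_pow]
      calc |q| ^ s ≤ |q| ^ 1 := pow_le_pow_of_le_one (abs_nonneg q) habs h
        _ = |q| := pow_one _
    have h4 := (abs_le.mp this).1
    have h5 : |q| = -q := abs_of_neg h2
    linarith

lemma denom_le (q : ℝ) (hq : q ∈ Set.Ioo (-1 : ℝ) 0) (s : ℕ) : 1 + q ≤ 1 + q ^ s := by
  linarith [pow_ge' q hq s]

lemma circCoeff_bound (q : ℝ) (hq : q ∈ Set.Ioo (-1 : ℝ) 0) (r : ℕ) :
    |circCoeff q (r+1)| ≤ |q| ^ r := by
  obtain ⟨h1, h2⟩ := hq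
  have hq1 : (0:ℝ) < 1 + q := by linarith
  have hd1 : (1:ℝ) + q ≤ 1 + q ^ (r+1+1) := denom_le q ⟨h1, h2⟩ _
  have hd2 : (1:ℝ) + q ≤ 1 + q ^ r := denom_le q ⟨h1, h2⟩ _
  have hD : (1+q)^2 ≤ (1 + q ^ (r+1+1)) * (1 + q ^ r) := by
    rw [sq]; exact mul_le_mul hd1 hd2 hq1.le (by linarith)
  have hDpos : (0:ℝ) < (1 + q ^ (r+1+1)) * (1 + q ^ r) :=
    mul_pos (lt_of_lt_of_le hq1 hd1) (lt_of_lt_of_le hq1 hd2)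
  rw [circCoeff]
  simp only [Nat.add_sub_cancel]
  rw [abs_div, abs_mul, abs_pow, abs_of_pos hDpos, div_le_iff₀ hDpos,
    abs_of_pos (show (0:ℝ) < (1+q)^2 by positivity)]
  exact mul_le_mul_of_nonneg_left hD (by positivity)

theorem stmt16 (q : ℝ) (hq : q ∈ Set.Ioo (-1 : ℝ) 0) (k : ℕ) :
    (1 / (2 * Real.pi)) * ∫ t in (0 : ℝ)..(2 * Real.pi),
        circDensity q t * (2 * Real.cos t) ^ (2 * k) =
      (Nat.choose (2 * k) k : ℝ) +
        2 * ∑ r ∈ Finset.Icc 1 k, (-1 : ℝ) ^ r * (Nat.choose (2 * k) (k - r) : ℝ) *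
          circCoeff q r := by
  obtain ⟨hq1, hq2⟩ := hq
  have habs : |q| < 1 := abs_lt.mpr ⟨hq1, by linarith⟩
  have hgeo : Summable fun r : ℕ => |q| ^ r := summable_geometric_of_lt_one (abs_nonneg q) habs
  -- bound on the series terms (without the power factor)
  have hbound1 : ∀ (r : ℕ) (t : ℝ),
      |(-1:ℝ)^(r+1) * circCoeff q (r+1) * Real.cos (2*(r+1:ℝ)*t)| ≤ |q| ^ r := by
    intro r t
    rw [abs_mul, abs_mul, abs_pow, abs_neg, abs_one, one_pow, one_mul]
    calc |circCoeff q (r+1)| * |Real.cos (2*(r+1:ℝ)*t)|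
        ≤ |q|^r * 1 :=
          mul_le_mul (circCoeff_bound q ⟨hq1, hq2⟩ r) (Real.abs_cos_le_one _)
            (abs_nonneg _) (pow_nonneg (abs_nonneg _) _)
      _ = |q|^r := mul_one _
  -- the continuous-map family
  set fCM : ℕ → C(ℝ, ℝ) := fun r =>
    ⟨fun t => (-1:ℝ)^(r+1) * circCoeff q (r+1) * Real.cos (2*(r+1:ℝ)*t) *
      (2*Real.cos t)^(2*k), by fun_prop⟩ with hfCM
  have hPbound : ∀ t : ℝ, |(2*Real.cos t)^(2*k)| ≤ (4:ℝ)^k := by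
    intro t
    rw [abs_pow]
    calc |2*Real.cos t|^(2*k) ≤ 2^(2*k) := by
          apply pow_le_pow_left₀ (abs_nonneg _)
          rw [abs_mul, abs_two]
          nlinarith [Real.abs_cos_le_one t]
      _ = (4:ℝ)^k := by rw [pow_mul]; norm_num
  have hbound2 : ∀ (r : ℕ) (t : ℝ), |fCM r t| ≤ |q| ^ r * 4^k := by
    intro r t
    rw [hfCM]
    simp only [ContinuousMap.coe_mk]
    rw [abs_mul]
    exact mul_le_mul (hbound1 r t) (hPbound t) (abs_nonneg _)
      (by positivity)
  -- summability of the sup norms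
  have hsum : Summable fun r : ℕ =>
      ‖(fCM r).restrict (⟨Set.uIcc (0:ℝ) (2*Real.pi), isCompact_uIcc⟩ :
        TopologicalSpace.Compacts ℝ)‖ := by
    apply Summable.of_nonneg_of_le (fun r => norm_nonneg _)
      (fun r => ?_) (hgeo.mul_right ((4:ℝ)^k))
    apply ContinuousMap.norm_le _ (by positivity) |>.mpr
    intro x
    simpa using hbound2 r x
  -- swap sum and integral
  have hswap : (∫ t in (0:ℝ)..(2*Real.pi), ∑' r : ℕ, fCM r t)
      = ∑' r : ℕ, ∫ t in (0:ℝ)..(2*Real.pi), fCM r t :=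
    (intervalIntegral.tsum_intervalIntegral_eq_of_summable_norm hsum).symm
  -- value of each integral
  have hval : ∀ r : ℕ, (∫ t in (0:ℝ)..(2*Real.pi), fCM r t)
      = (-1:ℝ)^(r+1) * circCoeff q (r+1) *
        (if r+1 ≤ k then 2*Real.pi*(Nat.choose (2*k) (k-(r+1))) else 0) := by
    intro r
    have : ∀ t : ℝ, fCM r t = ((-1:ℝ)^(r+1) * circCoeff q (r+1)) *
        (Real.cos (2*((r+1:ℕ):ℝ)*t) * (2*Real.cos t)^(2*k)) := by
      intro t
      rw [hfCM]
      simp only [ContinuousMap.coe_mk]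
      push_cast
      ring
    rw [intervalIntegral.integral_congr (fun t _ => this t),
      intervalIntegral.integral_const_mul, cosPowInt (r+1) k]
  -- rewrite integrand
  have hint : ∀ t : ℝ, circDensity q t * (2*Real.cos t)^(2*k)
      = (2*Real.cos t)^(2*k) + 2 * ∑' r : ℕ, fCM r t := by
    intro t
    rw [circDensity, add_mul, one_mul, mul_comm
      (2 * ∑' r : ℕ, (-1:ℝ)^(r+1) * circCoeff q (r+1) * Real.cos (2*(r+1:ℝ)*t))
      ((2*Real.cos t)^(2*k))]
    congr 1
    rw [mul_comm ((2*Real.cos t)^(2*k)), mul_assoc]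
    congr 1
    rw [← tsum_mul_right]
    rfl
  -- continuity of the tsum
  have hScont : Continuous fun t : ℝ => ∑' r : ℕ, fCM r t := by
    apply continuous_tsum (fun r => (fCM r).continuous) (hgeo.mul_right ((4:ℝ)^k))
    intro n x
    simpa using hbound2 n x
  -- split the integral
  rw [intervalIntegral.integral_congr (fun t _ => hint t),
    intervalIntegral.integral_add
      (((by fun_prop : Continuous fun t : ℝ => (2*Real.cos t)^(2*k))).intervalIntegrable _ _)
      (Continuous.intervalIntegrable (u := fun t => 2 * ∑' r : ℕ, fCM r t) (continuous_const.mul hScont) _ _)]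
  rw [intervalIntegral.integral_const_mul, hswap, tsum_congr hval]
  have hP : (∫ t in (0:ℝ)..(2*Real.pi), (2*Real.cos t)^(2*k))
      = 2*Real.pi*(Nat.choose (2*k) k) := by
    have h0 := cosPowInt 0 k
    simpa using h0
  have htsum : ∑' r : ℕ, ((-1:ℝ)^(r+1) * circCoeff q (r+1) *
      (if r+1 ≤ k then 2*Real.pi*((Nat.choose (2*k) (k-(r+1)) : ℕ) : ℝ) else 0))
      = ∑ r ∈ Finset.range k, ((-1:ℝ)^(r+1) * circCoeff q (r+1) *
        (2*Real.pi*((Nat.choose (2*k) (k-(r+1)) : ℕ) : ℝ))) := by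
    rw [tsum_eq_sum (s := Finset.range k) ?_]
    · refine Finset.sum_congr rfl fun r hr => ?_
      rw [if_pos (by simpa using Nat.succ_le_of_lt (Finset.mem_range.mp hr))]
    · intro r hr
      rw [if_neg (by simp at hr; omega), mul_zero]
  have hfac : ∑ r ∈ Finset.range k, ((-1:ℝ)^(r+1) * circCoeff q (r+1) *
        (2*Real.pi*((Nat.choose (2*k) (k-(r+1)) : ℕ) : ℝ)))
      = (2*Real.pi) * ∑ r ∈ Finset.range k, ((-1:ℝ)^(r+1) *
          ((Nat.choose (2*k) (k-(r+1)) : ℕ) : ℝ) * circCoeff q (r+1)) := by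
    rw [Finset.mul_sum]
    exact Finset.sum_congr rfl fun r _ => by ring
  have hIcc : ∑ r ∈ Finset.Icc 1 k, (-1:ℝ)^r * ((Nat.choose (2*k) (k-r) : ℕ) : ℝ) *
        circCoeff q r
      = ∑ r ∈ Finset.range k, (-1:ℝ)^(r+1) * ((Nat.choose (2*k) (k-(r+1)) : ℕ) : ℝ) *
        circCoeff q (r+1) := by
    rw [← Finset.Ico_add_one_right_eq_Icc, Finset.sum_Ico_eq_sum_range]
    refine Finset.sum_congr rfl fun i hi => ?_
    rw [add_comm 1 i]
  rw [htsum, hfac, hP, hIcc]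
  have hpi := Real.pi_ne_zero
  field_simp
end

section
/- Let q ∈ (−1,0) and let k ≥ 0 be an integer. Then C(2k,k) + 2 ∑_{r=1}^k (−1)^r C(2k, k−r) · q^{r−1}(1+q)² / ((1+q^{r+1})(1+q^{r−1})) = 2(1+q)/(1−q) · ∑_{r=0}^k (−1)^r C(2k+1, k−r) · (1−q^{2r+1}) / ((1+q^r)(1+q^{r+1})), where C(m,j) is the binomial coefficient and all denominators 1+q^s (s ≥ 0) are nonzero. -/
lemma tel_aux (a b : ℕ → ℝ) (k : ℕ) (hb : b (k+1) = 0) :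
    (∑ r ∈ Finset.Icc 1 k, (-1:ℝ)^r * b r * (a (r-1) - a (r+1))) +
      (∑ r ∈ Finset.range (k+1), (-1:ℝ)^r * (b r + b (r+1)) * (a r + a (r+1) - 1)) =
    b 0 * (a 0 + a 1 - 1) := by
  set G : ℕ → ℝ := fun r => (-1:ℝ)^(r+1) * b r * (a r + a (r-1) - 1) with hG
  have hS1 : (∑ r ∈ Finset.Icc 1 k, (-1:ℝ)^r * b r * (a (r-1) - a (r+1)))
      = ∑ r ∈ Finset.range k, (-1:ℝ)^(r+1) * b (r+1) * (a r - a (r+2)) := by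
    rw [show Finset.Icc 1 k = Finset.Ico 1 (k+1) by rw [Finset.Ico_add_one_right_eq_Icc],
      Finset.sum_Ico_eq_sum_range]
    apply Finset.sum_congr (by norm_num)
    intro i _
    have e : 1 + i = i + 1 := by omega
    rw [e]
    simp [Nat.add_sub_cancel]
  have hS2 : (∑ r ∈ Finset.range (k+1), (-1:ℝ)^r * (b r + b (r+1)) * (a r + a (r+1) - 1))
      = (∑ r ∈ Finset.range k, (-1:ℝ)^(r+1) * (b (r+1) + b (r+2)) * (a (r+1) + a (r+2) - 1))
        + (b 0 + b 1) * (a 0 + a 1 - 1) := by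
    rw [Finset.sum_range_succ']
    norm_num
  rw [hS1, hS2, ← add_assoc, ← Finset.sum_add_distrib]
  have hterm : ∀ r : ℕ, (-1:ℝ)^(r+1) * b (r+1) * (a r - a (r+2))
      + (-1:ℝ)^(r+1) * (b (r+1) + b (r+2)) * (a (r+1) + a (r+2) - 1)
      = G (r+1+1) - G (r+1) := by
    intro r
    simp only [hG, Nat.add_sub_cancel]
    ring
  rw [Finset.sum_congr rfl (fun r _ => hterm r), Finset.sum_range_sub (fun i => G (i+1))]
  have hGk : G (k+1) = 0 := by simp [hG, hb]
  have hG1 : G 1 = b 1 * (a 1 + a 0 - 1) := by norm_num [hG]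
  rw [hGk, hG1]
  ring

theorem stmt17 (q : ℝ) (hq : q ∈ Set.Ioo (-1 : ℝ) 0) (k : ℕ) :
    (Nat.choose (2 * k) k : ℝ) +
        2 * ∑ r ∈ Finset.Icc 1 k, (-1 : ℝ) ^ r * (Nat.choose (2 * k) (k - r) : ℝ) *
          (q ^ (r - 1) * (1 + q) ^ 2 / ((1 + q ^ (r + 1)) * (1 + q ^ (r - 1)))) =
      2 * (1 + q) / (1 - q) *
        ∑ r ∈ Finset.range (k + 1), (-1 : ℝ) ^ r * (Nat.choose (2 * k + 1) (k - r) : ℝ) *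
          ((1 - q ^ (2 * r + 1)) / ((1 + q ^ r) * (1 + q ^ (r + 1)))) := by
  obtain ⟨hq1, hq0⟩ := hq
  have hpos : ∀ s : ℕ, 0 < 1 + q ^ s := by
    intro s
    rcases Nat.eq_zero_or_pos s with h | h
    · norm_num [h]
    · have h1 : |q ^ s| < 1 := by
        rw [abs_pow]
        exact pow_lt_one₀ (abs_nonneg q) (abs_lt.mpr ⟨hq1, by linarith⟩) (by omega)
      have := (abs_lt.mp h1).1
      linarith
  set a : ℕ → ℝ := fun s => (1 + q ^ s)⁻¹ with ha
  set b : ℕ → ℝ := fun j => if j ≤ k then ((2*k).choose (k - j) : ℝ) else 0 with hb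
  have hane : ∀ s : ℕ, (1 + q ^ s) ≠ 0 := fun s => (hpos s).ne'
  have hq1p : (0:ℝ) < 1 + q := by linarith
  have hqm : (0:ℝ) < 1 - q := by linarith
  -- rewrite left sum
  have hL : ∀ r ∈ Finset.Icc 1 k, (-1 : ℝ) ^ r * (Nat.choose (2 * k) (k - r) : ℝ) *
          (q ^ (r - 1) * (1 + q) ^ 2 / ((1 + q ^ (r + 1)) * (1 + q ^ (r - 1))))
      = (-((1+q)/(1-q))) * ((-1:ℝ)^r * b r * (a (r-1) - a (r+1))) := by
    intro r hr
    simp only [Finset.mem_Icc] at hr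
    obtain ⟨m, rfl⟩ : ∃ m, r = m + 1 := ⟨r - 1, by omega⟩
    have hbr : b (m+1) = ((2*k).choose (k - (m+1)) : ℝ) := if_pos hr.2
    simp only [ha, hbr, Nat.add_sub_cancel]
    have h1 := hane (m+2)
    have h2 := hane m
    have hq1ne : q - 1 ≠ 0 := by linarith
    rw [show m + 1 + 1 = m + 2 from rfl]
    field_simp
    ring
  have hR : ∀ r ∈ Finset.range (k+1), (-1 : ℝ) ^ r * (Nat.choose (2 * k + 1) (k - r) : ℝ) *
          ((1 - q ^ (2 * r + 1)) / ((1 + q ^ r) * (1 + q ^ (r + 1))))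
      = (-1:ℝ)^r * (b r + b (r+1)) * (a r + a (r+1) - 1) := by
    intro r hr
    simp only [Finset.mem_range, Nat.lt_succ_iff] at hr
    have hpascal : ((Nat.choose (2 * k + 1) (k - r)) : ℝ) = b r + b (r+1) := by
      rcases eq_or_lt_of_le hr with h | h
      · subst h
        simp [hb]
      · have hbr : b r = ((2*k).choose (k - r) : ℝ) := if_pos hr
        have hbr1 : b (r+1) = ((2*k).choose (k - (r+1)) : ℝ) := if_pos h
        have e1 : k - r = (k - (r+1)) + 1 := by omega
        have hnat : (2*k+1).choose (k-r) = (2*k).choose (k-(r+1)) + (2*k).choose (k-r) := by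
          rw [e1, Nat.choose_succ_succ']
        rw [hnat, hbr, hbr1]
        push_cast
        ring
    rw [hpascal]
    have hfrac : (1 - q ^ (2 * r + 1)) / ((1 + q ^ r) * (1 + q ^ (r + 1)))
        = a r + a (r+1) - 1 := by
      simp only [ha]
      have h1 := hane r
      have h2 := hane (r+1)
      field_simp
      ring
    rw [hfrac]
  rw [Finset.sum_congr rfl hL, Finset.sum_congr rfl hR, ← Finset.mul_sum]
  have key := tel_aux a b k (by simp [hb])
  have hb0 : b 0 = (Nat.choose (2*k) k : ℝ) := by simp [hb]
  have hcA : 2*(1+q)/(1-q) * (a 0 + a 1 - 1) = 1 := by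
    simp only [ha, pow_zero, pow_one]
    field_simp
    ring
  linear_combination (-(2*(1+q)/(1-q))) * key - b 0 * hcA - hb0
end

section
/- Let q ∈ (−1,0) and let k ≥ 0 be an integer. Then 2(1+q)/(1−q) · ∑_{r=0}^k (−1)^r C(2k+1, k−r) · (1−q^{2r+1}) / ((1+q^r)(1+q^{r+1})) = (q+1)/(q−1) · 1/(k+1) · ∑_{r=−k−1}^{k+1} (−1)^r C(2k+2, k+1+r) · r/(1+q^r), where C(m,j) is the binomial coefficient, the r = 0 term of the right-hand sum is 0, and all denominators 1+q^r (r ∈ ℤ) are nonzero since |q^r| ≠ 1 for r ≠ 0. -/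
lemma aux_ne (q : ℝ) (h1 : -1 < q) (h2 : q < 0) (r : ℤ) : 1 + q ^ r ≠ 0 := by
  intro h
  have h3 : q ^ r = -1 := by linarith
  have key : (q * q) ^ r = 1 := by
    rw [mul_zpow, h3]; ring
  have h01 : (0:ℝ) ≤ q * q := mul_self_nonneg q
  have hne1 : q * q ≠ 1 := by nlinarith
  have hr0 : r = 0 := (zpow_eq_one_iff_right₀ h01 hne1).mp key
  rw [hr0] at h3
  norm_num at h3

lemma aux_binom (k s : ℕ) (hs1 : 1 ≤ s) (hs2 : s ≤ k) :
    ((k:ℝ)+1) * (Nat.choose (2*k+1) (k+1-s)) =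
      ((k:ℝ)+1) * (Nat.choose (2*k+1) (k-s)) + s * Nat.choose (2*k+2) (k+1+s) := by
  have hA : Nat.choose (2*k+1) ((k-s) + 1) * ((k-s) + 1)
      = Nat.choose (2*k+1) (k-s) * (2*k+1 - (k-s)) := Nat.choose_succ_right_eq _ _
  have e1 : (k - s) + 1 = k + 1 - s := by omega
  have e2 : 2*k+1 - (k-s) = k+1+s := by omega
  rw [e1, e2] at hA
  have hP : Nat.choose (2*k+2) (k+1+s)
      = Nat.choose (2*k+1) (k+s) + Nat.choose (2*k+1) (k+1+s) := by
    have h := Nat.choose_succ_succ (2*k+1) (k+s)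
    simp only [Nat.succ_eq_add_one] at h
    have e3 : (k+s)+1 = k+1+s := by omega
    rw [e3] at h
    simpa [show 2*k+1+1 = 2*k+2 by omega] using h
  have hs3 : Nat.choose (2*k+1) (k+s) = Nat.choose (2*k+1) (k+1-s) := by
    have h := Nat.choose_symm (n := 2*k+1) (k := k+s) (by omega)
    have e4 : 2*k+1 - (k+s) = k+1-s := by omega
    rw [e4] at h
    exact h.symm
  have hs4 : Nat.choose (2*k+1) (k+1+s) = Nat.choose (2*k+1) (k-s) := by
    have h := Nat.choose_symm (n := 2*k+1) (k := k+1+s) (by omega)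
    have e5 : 2*k+1 - (k+1+s) = k-s := by omega
    rw [e5] at h
    exact h.symm
  rw [hP, hs3, hs4]
  have hA' : (Nat.choose (2*k+1) (k+1-s) : ℝ) * ((k:ℝ)+1-s)
      = (Nat.choose (2*k+1) (k-s) : ℝ) * ((k:ℝ)+1+s) := by
    have := congrArg (Nat.cast : ℕ → ℝ) hA
    push_cast [Nat.sub_add_cancel] at this ⊢
    rw [Nat.cast_sub (by omega)] at this
    push_cast at this
    linarith [this]
  push_cast
  linarith [hA']

theorem stmt18 (q : ℝ) (hq : q ∈ Set.Ioo (-1 : ℝ) 0) (k : ℕ) :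
    2 * (1 + q) / (1 - q) *
        ∑ r ∈ Finset.range (k + 1), (-1 : ℝ) ^ r * (Nat.choose (2 * k + 1) (k - r) : ℝ) *
          ((1 - q ^ (2 * r + 1)) / ((1 + q ^ r) * (1 + q ^ (r + 1)))) =
      (q + 1) / (q - 1) * (1 / (k + 1)) *
        ∑ r ∈ Finset.Icc (-(k : ℤ) - 1) ((k : ℤ) + 1),
          (-1 : ℝ) ^ r * (Nat.choose (2 * k + 2) ((k : ℤ) + 1 + r).toNat : ℝ) *
            ((r : ℝ) / (1 + q ^ r)) := by
  obtain ⟨hq1, hq2⟩ := hq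
  have hne : ∀ r : ℤ, 1 + q ^ r ≠ 0 := aux_ne q hq1 hq2
  have hneN : ∀ r : ℕ, 1 + q ^ r ≠ 0 := fun r => by
    have := hne (r : ℤ); rwa [zpow_natCast] at this
  have hq0 : q ≠ 0 := ne_of_lt hq2
  have hpow0 : ∀ r : ℕ, q ^ r ≠ 0 := fun r => pow_ne_zero r hq0
  set f : ℕ → ℝ := fun s => (1 - q ^ s) / (1 + q ^ s) with hf
  have hf0 : f 0 = 0 := by simp [hf]
  set F : ℤ → ℝ := fun r =>
    (-1 : ℝ) ^ r * (Nat.choose (2 * k + 2) ((k : ℤ) + 1 + r).toNat : ℝ) *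
      ((r : ℝ) / (1 + q ^ r)) with hF
  set c : ℕ → ℝ := fun r => ((k:ℝ)+1) * ((-1:ℝ)^r * (Nat.choose (2*k+1) (k-r) : ℝ)) with hc
  set t : ℕ → ℝ := fun s =>
    (-1 : ℝ) ^ (s+1) * s * (Nat.choose (2*k+2) (k+1+s) : ℝ) with ht
  set T : ℝ := ∑ s ∈ Finset.range (k+2), t s * f s with hT
  -- Left-hand side
  have hL : 2 * ((k:ℝ)+1) *
      (∑ r ∈ Finset.range (k + 1), (-1 : ℝ) ^ r * (Nat.choose (2 * k + 1) (k - r) : ℝ) *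
        ((1 - q ^ (2 * r + 1)) / ((1 + q ^ r) * (1 + q ^ (r + 1))))) = T := by
    have hfrac : ∀ r : ℕ, (1 - q ^ (2*r+1)) / ((1+q^r)*(1+q^(r+1))) = (f r + f (r+1))/2 := by
      intro r
      simp only [hf]
      rw [div_add_div _ _ (hneN r) (hneN (r+1))]
      rw [div_div, div_eq_div_iff (by exact mul_ne_zero (hneN r) (hneN (r+1)))
        (by exact mul_ne_zero (mul_ne_zero (hneN r) (hneN (r+1))) two_ne_zero)]
      ring
    have h1 : 2 * ((k:ℝ)+1) *
        (∑ r ∈ Finset.range (k + 1), (-1 : ℝ) ^ r * (Nat.choose (2 * k + 1) (k - r) : ℝ) *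
          ((1 - q ^ (2 * r + 1)) / ((1 + q ^ r) * (1 + q ^ (r + 1)))))
        = ∑ r ∈ Finset.range (k+1), (c r * f r + c r * f (r+1)) := by
      rw [Finset.mul_sum]
      refine Finset.sum_congr rfl fun r hr => ?_
      rw [hfrac r, hc]
      ring
    rw [h1]
    have hcoef : ∀ r, r < k → c (r+1) + c r = t (r+1) := by
      intro r hr
      have hb := aux_binom k (r+1) (by omega) (by omega)
      rw [show k+1-(r+1) = k-r from by omega] at hb
      simp only [hc, ht]
      push_cast at hb ⊢
      linear_combination ((-1:ℝ)^r) * hb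
    have hedge : c k = t (k+1) := by
      simp only [hc, ht, Nat.sub_self, Nat.choose_zero_right,
        show k+1+(k+1) = 2*k+2 from by omega, Nat.choose_self]
      push_cast
      ring
    calc ∑ r ∈ Finset.range (k+1), (c r * f r + c r * f (r+1))
        = (∑ r ∈ Finset.range (k+1), c r * f r)
          + ∑ r ∈ Finset.range (k+1), c r * f (r+1) := Finset.sum_add_distrib
      _ = ((∑ r ∈ Finset.range k, c (r+1) * f (r+1)) + c 0 * f 0)
          + ((∑ r ∈ Finset.range k, c r * f (r+1)) + c k * f (k+1)) := by
            rw [Finset.sum_range_succ' (fun r => c r * f r) k,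
              Finset.sum_range_succ (fun r => c r * f (r+1)) k]
      _ = (∑ r ∈ Finset.range k, (c (r+1) * f (r+1) + c r * f (r+1))) + c k * f (k+1) := by
            rw [Finset.sum_add_distrib, hf0]; ring
      _ = (∑ r ∈ Finset.range k, t (r+1) * f (r+1)) + t (k+1) * f (k+1) := by
            refine congrArg₂ (· + ·) (Finset.sum_congr rfl fun r hr => ?_) ?_
            · rw [Finset.mem_range] at hr
              rw [← hcoef r hr]; ring
            · rw [hedge]
      _ = ∑ r ∈ Finset.range (k+1), t (r+1) * f (r+1) :=
            (Finset.sum_range_succ (fun r => t (r+1) * f (r+1)) k).symm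
      _ = ∑ s ∈ Finset.range (k+2), t s * f s := by
            rw [Finset.sum_range_succ' (fun s => t s * f s) (k+1), hf0]
            ring
      _ = T := hT.symm
  -- Right-hand side
  have hR : (∑ r ∈ Finset.Icc (-(k : ℤ) - 1) ((k : ℤ) + 1), F r) = -T := by
    have hsplit : Finset.Icc (-(k:ℤ)-1) ((k:ℤ)+1)
        = Finset.Icc (-(k:ℤ)-1) (-1) ∪ Finset.Icc 0 ((k:ℤ)+1) := by
      ext x; simp only [Finset.mem_Icc, Finset.mem_union]; omega
    have hdisj : Disjoint (Finset.Icc (-(k:ℤ)-1) (-1)) (Finset.Icc (0:ℤ) ((k:ℤ)+1)) := by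
      rw [Finset.disjoint_left]
      intro a ha hb
      simp only [Finset.mem_Icc] at ha hb
      omega
    rw [hsplit, Finset.sum_union hdisj]
    have hneg : ∑ r ∈ Finset.Icc (-(k:ℤ)-1) (-1), F r
        = ∑ s ∈ Finset.Icc 1 (k+1), F (-(s:ℤ)) := by
      refine Finset.sum_nbij' (fun r => (-r).toNat) (fun s => -(s:ℤ)) ?_ ?_ ?_ ?_ ?_
      · intro a ha; simp [Finset.mem_Icc] at ha ⊢; omega
      · intro a ha; simp [Finset.mem_Icc] at ha ⊢; omega
      · intro a ha; simp [Finset.mem_Icc] at ha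
        show -(((-a).toNat : ℕ) : ℤ) = a; omega
      · intro a ha; simp [Finset.mem_Icc] at ha
        show (-(-(a:ℤ))).toNat = a; omega
      · intro a ha
        simp only [Finset.mem_Icc] at ha
        rw [Int.toNat_of_nonneg (by omega), neg_neg]
    have hposd : Finset.Icc (0:ℤ) ((k:ℤ)+1) = insert 0 (Finset.Icc 1 ((k:ℤ)+1)) := by
      ext x; simp only [Finset.mem_Icc, Finset.mem_insert]; omega
    have hpos : ∑ r ∈ Finset.Icc (0:ℤ) ((k:ℤ)+1), F r
        = F 0 + ∑ s ∈ Finset.Icc 1 (k+1), F (s:ℤ) := by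
      rw [hposd, Finset.sum_insert (by simp [Finset.mem_Icc])]
      congr 1
      refine Finset.sum_nbij' (fun r => r.toNat) (fun s => (s:ℤ)) ?_ ?_ ?_ ?_ ?_
      · intro a ha; simp [Finset.mem_Icc] at ha ⊢; omega
      · intro a ha; simp [Finset.mem_Icc] at ha ⊢; omega
      · intro a ha; simp [Finset.mem_Icc] at ha
        show ((a.toNat : ℕ) : ℤ) = a; omega
      · intro a ha; simp [Finset.mem_Icc] at ha
        show ((a:ℤ)).toNat = a; omega
      · intro a ha
        simp only [Finset.mem_Icc] at ha
        rw [Int.toNat_of_nonneg (by omega)]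
    have hF0 : F 0 = 0 := by simp [hF]
    rw [hneg, hpos, hF0, zero_add, ← Finset.sum_add_distrib]
    have hTIcc : T = ∑ s ∈ Finset.Icc 1 (k+1), t s * f s := by
      rw [hT, show Finset.range (k+2) = insert 0 (Finset.Icc 1 (k+1)) from by
        ext x; simp only [Finset.mem_range, Finset.mem_insert, Finset.mem_Icc]; omega]
      rw [Finset.sum_insert (by simp), hf0]
      ring
    have hpair : ∀ s ∈ Finset.Icc 1 (k+1), F (-(s:ℤ)) + F ((s:ℤ)) = -(t s * f s) := by
      intro s hs
      simp only [Finset.mem_Icc] at hs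
      have e1 : ((k:ℤ) + 1 + (s:ℤ)).toNat = k+1+s := by omega
      have e2 : ((k:ℤ) + 1 + -(s:ℤ)).toNat = k+1-s := by omega
      have e3 : Nat.choose (2*k+2) (k+1-s) = Nat.choose (2*k+2) (k+1+s) := by
        have h := Nat.choose_symm (n := 2*k+2) (k := k+1+s) (by omega)
        rw [show 2*k+2-(k+1+s) = k+1-s from by omega] at h
        exact h
      have hinv : 1 + (q^s)⁻¹ ≠ 0 := by
        have := hne (-(s:ℤ)); rwa [zpow_neg, zpow_natCast] at this
      simp only [hF, hf, ht, e1, e2, e3]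
      simp only [zpow_neg, zpow_natCast, Int.cast_neg, Int.cast_natCast]
      rw [← inv_pow, inv_neg, inv_one]
      field_simp
      ring
    rw [Finset.sum_congr rfl hpair, hTIcc]
    exact Finset.sum_neg_distrib _
  rw [hR]
  have hk0 : (2:ℝ) * ((k:ℝ)+1) ≠ 0 := by positivity
  have hS1 : (∑ r ∈ Finset.range (k + 1), (-1 : ℝ) ^ r * (Nat.choose (2 * k + 1) (k - r) : ℝ) *
        ((1 - q ^ (2 * r + 1)) / ((1 + q ^ r) * (1 + q ^ (r + 1))))) = T / (2 * ((k:ℝ)+1)) := by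
    rw [eq_div_iff hk0]; linarith [hL]
  rw [hS1]
  have h1q : (1:ℝ) - q ≠ 0 := by linarith
  have hq1' : q - 1 ≠ 0 := by linarith
  have hk1 : ((k:ℝ)+1) ≠ 0 := by positivity
  field_simp
  ring
end
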